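/- Let u, v, h : ℝ → ℂ be square-integrable functions with ∫_ℝ |h(t)|² dt = 1. Set x₀ = ∫_ℝ |v(t)||h(t)| dt, y₀ = ∫_ℝ |u(t)||h(t)| dt, and A = ‖u‖₂ x₀ − ‖v‖₂ y₀, where ‖·‖₂ denotes the L² norm. Then ‖u‖₂² ‖v‖₂² − A² ≥ ( ∫_ℝ |u(t)||v(t)| dt )². -/

import Mathlib

open MeasureTheory Real

-- product of two L² functions is integrable
lemma aux_int_mul {f g : ℝ → ℝ} (hf : MemLp f 2 (volume : Measure ℝ))
    (hg : MemLp g 2 (volume : Measure ℝ)) :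
    Integrable (fun t => f t * g t) (volume : Measure ℝ) := by
  have h12 : (1 : ENNReal) / 1 = 1 / 2 + 1 / 2 := by
    rw [ENNReal.div_add_div_same, one_add_one_eq_two,
      ENNReal.div_self (by norm_num) (by norm_num)]
    exact (ENNReal.div_self (by norm_num) (by norm_num)).symm
  have := (hf.smul hg : MemLp (g • f) 1 (volume : Measure ℝ))
  rw [memLp_one_iff_integrable] at this
  simpa [Pi.smul_apply, smul_eq_mul, mul_comm, Pi.mul_def] using this

-- Cauchy–Schwarz for integrals of real L² functions
lemma aux_cs {f g : ℝ → ℝ} (hf : MemLp f 2 (volume : Measure ℝ))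
    (hg : MemLp g 2 (volume : Measure ℝ)) :
    (∫ t, f t * g t) ^ 2 ≤ (∫ t, f t ^ 2) * (∫ t, g t ^ 2) := by
  have hpq : (2 : ℝ).HolderConjugate 2 := by constructor <;> norm_num
  have hf2 : MemLp f (ENNReal.ofReal 2) (volume : Measure ℝ) := by
    simpa [ENNReal.ofReal_ofNat] using hf
  have hg2 : MemLp g (ENNReal.ofReal 2) (volume : Measure ℝ) := by
    simpa [ENNReal.ofReal_ofNat] using hg
  have key := integral_mul_norm_le_Lp_mul_Lq hpq hf2 hg2
  have e : ∀ x : ℝ, ‖x‖ ^ (2 : ℝ) = x ^ 2 := fun x => by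
    rw [Real.norm_eq_abs, show ((2:ℝ)) = ((2:ℕ):ℝ) by norm_num, Real.rpow_natCast, sq_abs]
  simp only [e] at key
  have hA : 0 ≤ ∫ t, f t ^ 2 := integral_nonneg fun t => sq_nonneg _
  have hB : 0 ≤ ∫ t, g t ^ 2 := integral_nonneg fun t => sq_nonneg _
  have habs : |∫ t, f t * g t| ≤ ∫ t, ‖f t‖ * ‖g t‖ := by
    simpa [Real.norm_eq_abs, abs_mul] using
      norm_integral_le_integral_norm (μ := (volume : Measure ℝ)) (fun t => f t * g t)
  have hsq : Real.sqrt ((∫ t, f t ^ 2)) = (∫ t, f t ^ 2) ^ ((1:ℝ)/2) :=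
    Real.sqrt_eq_rpow _
  calc (∫ t, f t * g t) ^ 2 = |∫ t, f t * g t| ^ 2 := (sq_abs _).symm
    _ ≤ ((∫ t, f t ^ 2) ^ ((1:ℝ)/2) * (∫ t, g t ^ 2) ^ ((1:ℝ)/2)) ^ 2 := by
        apply pow_le_pow_left₀ (abs_nonneg _) (habs.trans key)
    _ = (∫ t, f t ^ 2) * (∫ t, g t ^ 2) := by
        rw [← Real.sqrt_eq_rpow, ← Real.sqrt_eq_rpow, mul_pow, Real.sq_sqrt hA, Real.sq_sqrt hB]

lemma aux_expand {F G H : ℝ → ℝ} (a b : ℝ)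
    (IFG : Integrable (fun t => F t * G t) (volume : Measure ℝ))
    (IFH : Integrable (fun t => F t * H t) (volume : Measure ℝ))
    (IGH : Integrable (fun t => G t * H t) (volume : Measure ℝ))
    (IHH : Integrable (fun t => H t * H t) (volume : Measure ℝ)) :
    ∫ t, (F t - a * H t) * (G t - b * H t) =
      (∫ t, F t * G t) - b * (∫ t, F t * H t) - a * (∫ t, G t * H t)
        + a * b * (∫ t, H t * H t) := by
  calc ∫ t, (F t - a * H t) * (G t - b * H t)
      = ∫ t, ((F t * G t - b * (F t * H t)) - (a * (G t * H t) - a * b * (H t * H t))) := by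
        congr 1; funext t; ring
    _ = _ := by
        have h1 : Integrable (fun t => F t * G t - b * (F t * H t)) (volume : Measure ℝ) :=
          IFG.sub (IFH.const_mul b)
        have h2 : Integrable (fun t => a * (G t * H t) - a * b * (H t * H t))
            (volume : Measure ℝ) := (IGH.const_mul a).sub (IHH.const_mul (a*b))
        rw [integral_sub h1 h2, integral_sub IFG (IFH.const_mul b),
          integral_sub (IGH.const_mul a) (IHH.const_mul (a*b)),
          integral_const_mul, integral_const_mul, integral_const_mul]
        ring

/-- **The Gram-determinant key inequality (used in the proof of Theorem 3.4).**
For square-integrable `u, v, h` with `∫ |h|² = 1`, setting `x₀ = ∫ |v||h|`,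
`y₀ = ∫ |u||h|` and `A = ‖u‖₂ x₀ − ‖v‖₂ y₀`, one has
`‖u‖₂² ‖v‖₂² − A² ≥ (∫ |u(t)||v(t)| dt)²`. -/
theorem gram_determinant_inequality (u v h : ℝ → ℂ)
    (hu : MemLp u 2 (volume : Measure ℝ))
    (hv : MemLp v 2 (volume : Measure ℝ))
    (hh : MemLp h 2 (volume : Measure ℝ))
    (hnorm : ∫ t : ℝ, ‖h t‖ ^ 2 = 1) :
    (∫ t : ℝ, ‖u t‖ ^ 2) * (∫ t : ℝ, ‖v t‖ ^ 2) -
      (Real.sqrt (∫ t : ℝ, ‖u t‖ ^ 2) * (∫ t : ℝ, ‖v t‖ * ‖h t‖) -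
        Real.sqrt (∫ t : ℝ, ‖v t‖ ^ 2) * (∫ t : ℝ, ‖u t‖ * ‖h t‖)) ^ 2 ≥
    (∫ t : ℝ, ‖u t‖ * ‖v t‖) ^ 2 := by
  have hU : MemLp (fun t => ‖u t‖) 2 (volume : Measure ℝ) := hu.norm
  have hV : MemLp (fun t => ‖v t‖) 2 (volume : Measure ℝ) := hv.norm
  have hH : MemLp (fun t => ‖h t‖) 2 (volume : Measure ℝ) := hh.norm
  set a2 := ∫ t : ℝ, ‖u t‖ ^ 2 with ha2def
  set b2 := ∫ t : ℝ, ‖v t‖ ^ 2 with hb2def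
  set c := ∫ t : ℝ, ‖u t‖ * ‖v t‖ with hcdef
  set x0 := ∫ t : ℝ, ‖v t‖ * ‖h t‖ with hx0def
  set y0 := ∫ t : ℝ, ‖u t‖ * ‖h t‖ with hy0def
  -- integrability of products
  have IUV : Integrable (fun t => ‖u t‖ * ‖v t‖) (volume : Measure ℝ) := aux_int_mul hU hV
  have IUH : Integrable (fun t => ‖u t‖ * ‖h t‖) (volume : Measure ℝ) := aux_int_mul hU hH
  have IVH : Integrable (fun t => ‖v t‖ * ‖h t‖) (volume : Measure ℝ) := aux_int_mul hV hH
  have IHH : Integrable (fun t => ‖h t‖ * ‖h t‖) (volume : Measure ℝ) := aux_int_mul hH hH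
  have IUU : Integrable (fun t => ‖u t‖ * ‖u t‖) (volume : Measure ℝ) := aux_int_mul hU hU
  have IVV : Integrable (fun t => ‖v t‖ * ‖v t‖) (volume : Measure ℝ) := aux_int_mul hV hV
  have Ih1 : (∫ t : ℝ, ‖h t‖ * ‖h t‖) = 1 := by
    simpa [pow_two] using hnorm
  have hU2 : (∫ t : ℝ, ‖u t‖ * ‖u t‖) = a2 := by
    rw [ha2def]; congr 1; funext t; ring
  have hV2 : (∫ t : ℝ, ‖v t‖ * ‖v t‖) = b2 := by
    rw [hb2def]; congr 1; funext t; ring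
  -- L² membership of projections
  have hF : MemLp (fun t => ‖u t‖ - y0 * ‖h t‖) 2 (volume : Measure ℝ) :=
    hU.sub (hH.const_mul y0)
  have hG : MemLp (fun t => ‖v t‖ - x0 * ‖h t‖) 2 (volume : Measure ℝ) :=
    hV.sub (hH.const_mul x0)
  -- Cauchy–Schwarz for |u|,|v|
  have g2 : c ^ 2 ≤ a2 * b2 := aux_cs hU hV
  -- Cauchy–Schwarz for the projections
  have g1 := aux_cs hF hG
  have e1 : (∫ t, (‖u t‖ - y0 * ‖h t‖) * (‖v t‖ - x0 * ‖h t‖)) = c - x0 * y0 := by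
    rw [aux_expand y0 x0 IUV IUH IVH IHH, Ih1]; rw [hcdef, hx0def, hy0def]; ring
  have e2 : (∫ t, (‖u t‖ - y0 * ‖h t‖) ^ 2) = a2 - y0 ^ 2 := by
    have : (∫ t, (‖u t‖ - y0 * ‖h t‖) ^ 2)
        = ∫ t, (‖u t‖ - y0 * ‖h t‖) * (‖u t‖ - y0 * ‖h t‖) := by
      congr 1; funext t; ring
    rw [this, aux_expand y0 y0 IUU IUH IUH IHH, Ih1, hU2]; rw [hy0def]; ring
  have e3 : (∫ t, (‖v t‖ - x0 * ‖h t‖) ^ 2) = b2 - x0 ^ 2 := by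
    have : (∫ t, (‖v t‖ - x0 * ‖h t‖) ^ 2)
        = ∫ t, (‖v t‖ - x0 * ‖h t‖) * (‖v t‖ - x0 * ‖h t‖) := by
      congr 1; funext t; ring
    rw [this, aux_expand x0 x0 IVV IVH IVH IHH, Ih1, hV2]; rw [hx0def]; ring
  rw [e1, e2, e3] at g1
  -- positivity facts
  have ha2 : 0 ≤ a2 := integral_nonneg fun t => sq_nonneg _
  have hb2 : 0 ≤ b2 := integral_nonneg fun t => sq_nonneg _
  have hx0 : 0 ≤ x0 := integral_nonneg fun t => mul_nonneg (norm_nonneg _) (norm_nonneg _)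
  have hy0 : 0 ≤ y0 := integral_nonneg fun t => mul_nonneg (norm_nonneg _) (norm_nonneg _)
  have hsa : Real.sqrt a2 ^ 2 = a2 := Real.sq_sqrt ha2
  have hsb : Real.sqrt b2 ^ 2 = b2 := Real.sq_sqrt hb2
  have hab : c ≤ Real.sqrt a2 * Real.sqrt b2 := by
    have : c ≤ Real.sqrt (a2 * b2) := by
      calc c ≤ |c| := le_abs_self c
        _ = Real.sqrt (c ^ 2) := (Real.sqrt_sq_eq_abs c).symm
        _ ≤ Real.sqrt (a2 * b2) := Real.sqrt_le_sqrt g2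
    rwa [Real.sqrt_mul ha2] at this
  nlinarith [g1, mul_nonneg (mul_nonneg hx0 hy0) (sub_nonneg.mpr hab), Real.sqrt_nonneg a2,
    Real.sqrt_nonneg b2, hsa, hsb]
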